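/- arXiv:1207.4036 — 2 statements merged into one kernel-verified Lean document; each statement's English description precedes it below -/
import Mathlib

section
/- Let H be a subspace of the continuous functions on a compact metric space K with values in ℝ^N, and suppose there is a constant C such that every u ∈ H is Lipschitz with constant C·‖u‖_∞ (i.e., the C¹-norm is controlled by the C⁰-norm on H). If H is closed in the sup-norm, then H is finite-dimensional. -/
set_option maxHeartbeats 1000000 in
/-- A closed subspace `H` of `C(K, ℝ^N)`, `K` compact metric, on which every element
is Lipschitz with constant `C · ‖u‖_∞`, is finite-dimensional. -/
theorem finiteDimensional_of_uniform_lipschitz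
    {K : Type*} [MetricSpace K] [CompactSpace K] (N : ℕ)
    (H : Submodule ℝ C(K, EuclideanSpace ℝ (Fin N)))
    (hclosed : IsClosed (H : Set C(K, EuclideanSpace ℝ (Fin N))))
    (C : ℝ) (hC : 0 < C)
    (hLip : ∀ u ∈ H, ∀ x y : K, ‖u x - u y‖ ≤ C * ‖u‖ * dist x y) :
    FiniteDimensional ℝ H := by
  set E := EuclideanSpace ℝ (Fin N)
  set S : Set C(K, E) := (H : Set C(K, E)) ∩ Metric.closedBall 0 1 with hS
  have hSclosed : IsClosed S := hclosed.inter Metric.isClosed_closedBall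
  -- transfer to bounded continuous functions
  let e : C(K, E) ≃ᵢ (BoundedContinuousFunction K E) := ContinuousMap.isometryEquivBoundedOfCompact K E
  have hA : IsCompact (e '' S) := by
    apply BoundedContinuousFunction.arzela_ascoli₂ (Metric.closedBall (0 : E) 1)
      (isCompact_closedBall 0 1)
    · exact e.toHomeomorph.isClosedEmbedding.isClosed_iff_image_isClosed.mp hSclosed
    · rintro f x ⟨g, ⟨-, hg1⟩, rfl⟩
      have : ‖g‖ ≤ 1 := by simpa using hg1
      have hx : ‖g x‖ ≤ ‖g‖ := g.norm_coe_le_norm x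
      simp only [e, ContinuousMap.isometryEquivBoundedOfCompact]
      rw [Metric.mem_closedBall, dist_zero_right]; exact hx.trans this
    · apply Metric.equicontinuous_of_continuity_modulus (fun t => C * t)
      · exact (continuous_mul_left C).tendsto' 0 0 (by simp)
      · rintro x y ⟨f, ⟨g, ⟨hgH, hg1⟩, rfl⟩⟩
        have hgn : ‖g‖ ≤ 1 := by simpa using hg1
        have := hLip g hgH x y
        have h2 : C * ‖g‖ * dist x y ≤ C * 1 * dist x y := by
          gcongr
        calc dist ((e g) x) ((e g) y) = ‖g x - g y‖ := by
              exact dist_eq_norm _ _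
          _ ≤ C * ‖g‖ * dist x y := this
          _ ≤ C * dist x y := by simpa using h2
  have hScompact : IsCompact S := by
    have := hA.image e.symm.continuous
    simpa [Set.image_image] using this
  have hball : IsCompact (Metric.closedBall (0 : H) 1) := by
    rw [Topology.IsEmbedding.subtypeVal.isCompact_iff]
    convert hScompact using 1
    ext f
    constructor
    · rintro ⟨⟨g, hgH⟩, hb, rfl⟩
      refine ⟨hgH, ?_⟩
      exact hb
    · rintro ⟨hfH, hb⟩
      exact ⟨⟨f, hfH⟩, hb, rfl⟩
  exact FiniteDimensional.of_isCompact_closedBall₀ (𝕜 := ℝ) (V := ↥H) one_pos hball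
end

section
/- Let Ω ⊆ ℂ be open and connected, A ⊆ Ω a set with an accumulation point in Ω, and (u_j) a locally uniformly bounded sequence of holomorphic functions on Ω such that lim_{j→∞} u_j(z) exists for every z ∈ A. Then (u_j) converges locally uniformly on Ω to a holomorphic function. (Vitali's theorem.) -/
open Filter

open Metric

lemma conv_at_center {c : ℂ} {R L : ℝ} (hL : 0 ≤ L) (g : ℕ → ℂ → ℂ) (S : Set ℂ)
    (hlip : ∀ j, ∀ z ∈ ball c R, ‖g j z - g j c‖ ≤ L * ‖z - c‖)
    (hS : S ⊆ ball c R) (hc : c ∈ closure (S \ {c}))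
    (hconv : ∀ z ∈ S, ∃ l, Tendsto (fun j => g j z) atTop (nhds l)) :
    ∃ l, Tendsto (fun j => g j c) atTop (nhds l) := by
  apply cauchySeq_tendsto_of_complete
  rw [Metric.cauchySeq_iff]
  intro ε hε
  have hL1 : (0:ℝ) < L + 1 := by linarith
  have hpos : 0 < ε / (3 * (L + 1)) := by positivity
  obtain ⟨w, hw, hwd⟩ := Metric.mem_closure_iff.mp hc _ hpos
  obtain ⟨l, hl⟩ := hconv w hw.1
  have hcs : CauchySeq (fun j => g j w) := hl.cauchySeq
  rw [Metric.cauchySeq_iff] at hcs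
  obtain ⟨N, hN⟩ := hcs (ε / 3) (by positivity)
  refine ⟨N, fun m hm n hn => ?_⟩
  have hwball := hS hw.1
  have h1 : ∀ j, dist (g j c) (g j w) ≤ ε / 3 := by
    intro j
    have h := hlip j w hwball
    rw [dist_comm c w, dist_eq_norm] at hwd
    have hLw : L * ‖w - c‖ ≤ L * (ε / (3 * (L + 1))) :=
      mul_le_mul_of_nonneg_left hwd.le hL
    have hfin : L * (ε / (3 * (L + 1))) ≤ ε / 3 := by
      have heq : L * (ε / (3 * (L + 1))) = ε / 3 * (L / (L + 1)) := by
        field_simp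
      rw [heq]
      have h1 : L / (L + 1) ≤ 1 := (div_le_one hL1).mpr (by linarith)
      calc ε / 3 * (L / (L+1)) ≤ ε / 3 * 1 :=
            mul_le_mul_of_nonneg_left h1 (by positivity)
        _ = ε / 3 := mul_one _
    rw [dist_comm, dist_eq_norm]
    exact h.trans (hLw.trans hfin)
  have t4 := dist_triangle4 (g m c) (g m w) (g n w) (g n c)
  have h2 : dist (g n w) (g n c) ≤ ε / 3 := by rw [dist_comm]; exact h1 n
  have h3 := hN m hm n hn
  linarith [h1 m]

/-- Local version of Vitali's theorem on a ball. -/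
lemma vitali_local {c : ℂ} {R M : ℝ} (hR : 0 < R) (f : ℕ → ℂ → ℂ)
    (hf : ∀ j, DifferentiableOn ℂ (f j) (ball c R))
    (hM : ∀ j, ∀ z ∈ ball c R, ‖f j z‖ ≤ M)
    (S : Set ℂ) (hS : S ⊆ ball c R) (hc : c ∈ closure (S \ {c}))
    (hconv : ∀ z ∈ S, ∃ l, Tendsto (fun j => f j z) atTop (nhds l)) :
    ∃ ρ > 0, ball c ρ ⊆ ball c R ∧ UniformCauchySeqOn f atTop (ball c ρ) := by
  set K : ℝ := max M 1 with hKdef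
  set q : ℝ := max ((2 * K + 1) / R) 1 with hqdef
  have hK1 : (1:ℝ) ≤ K := le_max_right _ _
  have hMK : M ≤ K := le_max_left _ _
  have hK0 : (0:ℝ) < K := lt_of_lt_of_le one_pos hK1
  have hq1 : (1:ℝ) ≤ q := le_max_right _ _
  have hq0 : (0:ℝ) < q := lt_of_lt_of_le one_pos hq1
  have hqR : (2 * K + 1) / R ≤ q := le_max_left _ _
  have hmemc : ball c R ∈ nhds c := isOpen_ball.mem_nhds (mem_ball_self hR)
  set v : ℕ → ℕ → ℂ → ℂ := fun n j => (fun g => dslope g c)^[n] (f j) with hvdef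
  have hv0 : ∀ j, v 0 j = f j := fun j => rfl
  have hvs : ∀ n j, v (n + 1) j = dslope (v n j) c := fun n j =>
    Function.iterate_succ_apply' (fun g => dslope g c) n (f j)
  have hvdiff : ∀ n j, DifferentiableOn ℂ (v n j) (ball c R) := by
    intro n
    induction n with
    | zero => exact hf
    | succ n ih =>
      intro j
      rw [hvs n j]
      exact (Complex.differentiableOn_dslope hmemc).mpr (ih j)
  have hvbound : ∀ n j, ∀ z ∈ ball c R, ‖v n j z‖ ≤ K * q ^ n := by
    intro n
    induction n with
    | zero =>
      intro j z hz
      simpa [hv0] using (hM j z hz).trans hMK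
    | succ n ih =>
      intro j z hz
      rw [hvs n j]
      have hmaps : Set.MapsTo (v n j) (ball c R) (ball (v n j c) (2 * (K * q ^ n) + 1)) := by
        intro w hw
        rw [mem_ball, dist_eq_norm]
        calc ‖v n j w - v n j c‖ ≤ ‖v n j w‖ + ‖v n j c‖ := norm_sub_le _ _
          _ ≤ K * q ^ n + K * q ^ n := add_le_add (ih j w hw) (ih j c (mem_ball_self hR))
          _ < 2 * (K * q ^ n) + 1 := by linarith
      have hsch := Complex.norm_dslope_le_div_of_mapsTo_ball (hvdiff n j) (hmaps.mono_right ball_subset_closedBall) hz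
      refine hsch.trans ?_
      have hqn : (1:ℝ) ≤ q ^ n := one_le_pow₀ hq1
      have h1 : 2 * (K * q ^ n) + 1 ≤ (2 * K + 1) * q ^ n := by nlinarith
      calc (2 * (K * q ^ n) + 1) / R ≤ (2 * K + 1) * q ^ n / R := by gcongr
        _ = (2 * K + 1) / R * q ^ n := by ring
        _ ≤ q * q ^ n := by
            apply mul_le_mul_of_nonneg_right hqR (by positivity)
        _ ≤ K * q ^ (n + 1) := by
            rw [pow_succ]
            nlinarith [mul_pos (pow_pos hq0 n) hq0]
  have hlip : ∀ n j, ∀ z ∈ ball c R, ‖v n j z - v n j c‖ ≤ K * q ^ (n + 1) * ‖z - c‖ := by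
    intro n j z hz
    have h := sub_smul_dslope (v n j) c z
    rw [smul_eq_mul] at h
    have heq : v n j z - v n j c = (z - c) * v (n + 1) j z := by
      rw [hvs n j]; linear_combination -h
    rw [heq, norm_mul]
    calc ‖z - c‖ * ‖v (n+1) j z‖ ≤ ‖z - c‖ * (K * q ^ (n+1)) :=
          mul_le_mul_of_nonneg_left (hvbound (n+1) j z hz) (norm_nonneg _)
      _ = K * q ^ (n+1) * ‖z - c‖ := by ring
  have hvconv : ∀ n, (∀ z ∈ S \ {c}, ∃ l, Tendsto (fun j => v n j z) atTop (nhds l)) ∧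
      (∃ l, Tendsto (fun j => v n j c) atTop (nhds l)) := by
    intro n
    induction n with
    | zero =>
      refine ⟨fun z hz => hconv z hz.1, ?_⟩
      exact conv_at_center (R := R) (L := K * q ^ (0 + 1)) (by positivity) (fun j => v 0 j) S
        (fun j z hz => hlip 0 j z hz) hS hc hconv
    | succ n ih =>
      have hstep : ∀ z ∈ S \ {c}, ∃ l, Tendsto (fun j => v (n+1) j z) atTop (nhds l) := by
        intro z hz
        obtain ⟨l₁, hl₁⟩ := ih.1 z hz
        obtain ⟨l₂, hl₂⟩ := ih.2
        have hne : z ≠ c := hz.2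
        have hzc : z - c ≠ 0 := sub_ne_zero.mpr hne
        refine ⟨(z - c)⁻¹ * (l₁ - l₂), ?_⟩
        have heq : ∀ j, v (n+1) j z = (z - c)⁻¹ * (v n j z - v n j c) := by
          intro j
          rw [hvs n j, dslope_of_ne _ hne, slope_def_field, div_eq_inv_mul]
        simp_rw [heq]
        exact ((hl₁.sub hl₂).const_mul _)
      refine ⟨hstep, ?_⟩
      refine conv_at_center (R := R) (L := K * q ^ (n + 1 + 1)) (by positivity)
        (fun j => v (n+1) j) (S \ {c}) (fun j z hz => hlip (n+1) j z hz)
        ((Set.diff_subset).trans hS) ?_ hstep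
      rwa [Set.diff_diff, Set.union_self]
  have hrecon : ∀ (N : ℕ) j z, f j z =
      (∑ n ∈ Finset.range N, (z - c) ^ n * v n j c) + (z - c) ^ N * v N j z := by
    intro N j z
    induction N with
    | zero => simp [hv0]
    | succ N ih =>
      rw [ih, Finset.sum_range_succ]
      have h := sub_smul_dslope (v N j) c z
      rw [smul_eq_mul] at h
      have hsplit : v N j z = v N j c + (z - c) * v (N+1) j z := by
        rw [hvs N j]; linear_combination -h
      rw [hsplit]
      ring
  refine ⟨min R (1 / (2 * q)), by positivity, ball_subset_ball (min_le_left _ _), ?_⟩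
  set ρ : ℝ := min R (1 / (2 * q)) with hρdef
  have hρR : ρ ≤ R := min_le_left _ _
  have hρq : ρ ≤ 1 / (2 * q) := min_le_right _ _
  have hρhalf : ρ ≤ 1 / 2 := hρq.trans (by
    rw [div_le_div_iff₀ (by positivity) (by norm_num)]
    linarith)
  have hρ0 : 0 < ρ := by positivity
  rw [Metric.uniformCauchySeqOn_iff]
  intro ε hε
  obtain ⟨N, hN⟩ := exists_pow_lt_of_lt_one (show (0:ℝ) < ε / (4 * K) by positivity)
    (show (1:ℝ)/2 < 1 by norm_num)
  have hcoef : ∀ n, CauchySeq (fun j => v n j c) := fun n => (hvconv n).2.choose_spec.cauchySeq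
  have hJ : ∀ (N' : ℕ), ∃ J, ∀ m ≥ J, ∀ k ≥ J, ∀ n < N',
      dist (v n m c) (v n k c) < ε / (2 * (N + 1)) := by
    intro N'
    induction N' with
    | zero => exact ⟨0, fun m _ k _ n hn => absurd hn (Nat.not_lt_zero n)⟩
    | succ N' ih =>
      obtain ⟨J₁, hJ₁⟩ := ih
      obtain ⟨J₂, hJ₂⟩ := Metric.cauchySeq_iff.mp (hcoef N') (ε / (2 * (N + 1))) (by positivity)
      refine ⟨max J₁ J₂, fun m hm k hk n hn => ?_⟩
      rcases Nat.lt_succ_iff_lt_or_eq.mp hn with h | h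
      · exact hJ₁ m (le_trans (le_max_left _ _) hm) k (le_trans (le_max_left _ _) hk) n h
      · subst h
        exact hJ₂ m (le_trans (le_max_right _ _) hm) k (le_trans (le_max_right _ _) hk)
  obtain ⟨J, hJJ⟩ := hJ N
  refine ⟨J, fun m hm k hk z hz => ?_⟩
  have hzR : z ∈ ball c R := ball_subset_ball hρR hz
  have hzρ : ‖z - c‖ < ρ := by rwa [mem_ball, dist_eq_norm] at hz
  have hzc1 : ‖z - c‖ ≤ 1 := le_trans hzρ.le (hρhalf.trans (by norm_num))
  rw [dist_eq_norm]
  have hkey : f m z - f k z = (∑ n ∈ Finset.range N, (z - c) ^ n * (v n m c - v n k c)) +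
      (z - c) ^ N * (v N m z - v N k z) := by
    rw [hrecon N m z, hrecon N k z]
    simp only [mul_sub, Finset.sum_sub_distrib]
    ring
  rw [hkey]
  have hterm : ∀ n ∈ Finset.range N,
      ‖(z - c) ^ n * (v n m c - v n k c)‖ ≤ ε / (2 * (N + 1)) := by
    intro n hn
    rw [norm_mul, norm_pow]
    have h1 : ‖z - c‖ ^ n ≤ 1 := pow_le_one₀ (norm_nonneg _) hzc1
    have h2 : ‖v n m c - v n k c‖ ≤ ε / (2 * (N + 1)) := by
      rw [← dist_eq_norm]
      exact (hJJ m hm k hk n (Finset.mem_range.mp hn)).le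
    calc ‖z - c‖ ^ n * ‖v n m c - v n k c‖ ≤ 1 * (ε / (2 * (N + 1))) :=
          mul_le_mul h1 h2 (norm_nonneg _) one_pos.le
      _ = ε / (2 * (N + 1)) := one_mul _
  have hsum : ‖∑ n ∈ Finset.range N, (z - c) ^ n * (v n m c - v n k c)‖ ≤ ε / 2 := by
    calc ‖∑ n ∈ Finset.range N, (z - c) ^ n * (v n m c - v n k c)‖
        ≤ ∑ n ∈ Finset.range N, ‖(z - c) ^ n * (v n m c - v n k c)‖ := norm_sum_le _ _
      _ ≤ ∑ _n ∈ Finset.range N, ε / (2 * (N + 1)) := Finset.sum_le_sum hterm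
      _ = N * (ε / (2 * (N + 1))) := by rw [Finset.sum_const, Finset.card_range,
          nsmul_eq_mul]
      _ ≤ ε / 2 := by
          rw [← mul_div_assoc, div_le_div_iff₀ (by positivity) (by norm_num : (0:ℝ) < 2)]
          nlinarith [Nat.cast_nonneg (α := ℝ) N]
  have htail : ‖(z - c) ^ N * (v N m z - v N k z)‖ < ε / 2 := by
    rw [norm_mul, norm_pow]
    have h2 : ‖v N m z - v N k z‖ ≤ 2 * (K * q ^ N) := by
      calc ‖v N m z - v N k z‖ ≤ ‖v N m z‖ + ‖v N k z‖ := norm_sub_le _ _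
        _ ≤ K * q ^ N + K * q ^ N := add_le_add (hvbound N m z hzR) (hvbound N k z hzR)
        _ = 2 * (K * q ^ N) := by ring
    have h3 : ‖z - c‖ ^ N ≤ (1 / (2 * q)) ^ N :=
      pow_le_pow_left₀ (norm_nonneg _) (hzρ.le.trans hρq) N
    have h4 : (1 / (2 * q)) ^ N * q ^ N = (1 / 2) ^ N := by
      rw [← mul_pow]
      congr 1
      field_simp
    calc ‖z - c‖ ^ N * ‖v N m z - v N k z‖ ≤ (1 / (2 * q)) ^ N * (2 * (K * q ^ N)) :=
          mul_le_mul h3 h2 (norm_nonneg _) (by positivity)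
      _ = 2 * K * ((1 / (2 * q)) ^ N * q ^ N) := by ring
      _ = 2 * K * (1 / 2) ^ N := by rw [h4]
      _ < 2 * K * (ε / (4 * K)) := by
          apply mul_lt_mul_of_pos_left hN (by positivity)
      _ = ε / 2 := by field_simp; ring
  calc ‖(∑ n ∈ Finset.range N, (z - c) ^ n * (v n m c - v n k c)) +
        (z - c) ^ N * (v N m z - v N k z)‖
      ≤ ‖∑ n ∈ Finset.range N, (z - c) ^ n * (v n m c - v n k c)‖ +
        ‖(z - c) ^ N * (v N m z - v N k z)‖ := norm_add_le _ _
    _ < ε := by linarith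

/-- Vitali's theorem: a locally uniformly bounded sequence of holomorphic functions on a
connected open set `Ω ⊆ ℂ` which converges pointwise on a set `A ⊆ Ω` having an accumulation
point in `Ω` converges locally uniformly on `Ω` to a holomorphic function. -/
theorem vitali
    (Ω : Set ℂ) (hΩ : IsOpen Ω) (hconn : IsConnected Ω)
    (u : ℕ → ℂ → ℂ) (hu : ∀ j, DifferentiableOn ℂ (u j) Ω)
    (A : Set ℂ) (hAΩ : A ⊆ Ω)
    (hacc : ∃ z₀ ∈ Ω, z₀ ∈ closure (A \ {z₀}))
    (hbd : ∀ K ⊆ Ω, IsCompact K → ∃ M : ℝ, ∀ j, ∀ z ∈ K, ‖u j z‖ ≤ M)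
    (hptwise : ∀ z ∈ A, ∃ l : ℂ, Tendsto (fun j => u j z) atTop (nhds l)) :
    ∃ f : ℂ → ℂ, DifferentiableOn ℂ f Ω ∧
      TendstoLocallyUniformlyOn u f atTop Ω := by
  obtain ⟨z₀, hz₀Ω, hz₀acc⟩ := hacc
  set T : Set ℂ := {c : ℂ | c ∈ Ω ∧ ∃ ρ > 0, ball c ρ ⊆ Ω ∧
    UniformCauchySeqOn u atTop (ball c ρ)} with hTdef
  -- T is open
  have hTopen : IsOpen T := by
    rw [Metric.isOpen_iff]
    rintro c ⟨hcΩ, ρ, hρ0, hρΩ, hUCS⟩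
    refine ⟨ρ, hρ0, fun w hw => ?_⟩
    have hsub : ball w (ρ - dist w c) ⊆ ball c ρ := ball_subset_ball' (by rw [mem_ball] at hw; linarith)
    exact ⟨hρΩ hw, ρ - dist w c, by rw [mem_ball] at hw; linarith,
      hsub.trans hρΩ, hUCS.mono hsub⟩
  -- the main step, from the local lemma
  have step : ∀ c ∈ Ω, ∀ S : Set ℂ, S ⊆ Ω →
      (∀ z ∈ S, ∃ l, Tendsto (fun j => u j z) atTop (nhds l)) →
      c ∈ closure (S \ {c}) → c ∈ T := by
    intro c hcΩ S hSΩ hSconv hcc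
    obtain ⟨R, hR0, hRΩ⟩ : ∃ R > 0, closedBall c R ⊆ Ω :=
      nhds_basis_closedBall.mem_iff.mp (hΩ.mem_nhds hcΩ)
    obtain ⟨M, hM⟩ := hbd (closedBall c R) hRΩ (isCompact_closedBall c R)
    have hball : ball c R ⊆ Ω := ball_subset_closedBall.trans hRΩ
    have hcc' : c ∈ closure ((S ∩ ball c R) \ {c}) := by
      rw [mem_closure_iff_nhds] at hcc ⊢
      intro t ht
      obtain ⟨w, hw⟩ := hcc (t ∩ ball c R)
        (Filter.inter_mem ht (isOpen_ball.mem_nhds (mem_ball_self hR0)))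
      exact ⟨w, hw.1.1, ⟨⟨hw.2.1, hw.1.2⟩, hw.2.2⟩⟩
    obtain ⟨ρ, hρ0, hρsub, hUCS⟩ := vitali_local hR0 u
      (fun j => (hu j).mono hball)
      (fun j z hz => hM j z (ball_subset_closedBall hz))
      (S ∩ ball c R) Set.inter_subset_right hcc'
      (fun z hz => hSconv z hz.1)
    exact ⟨hcΩ, ρ, hρ0, hρsub.trans hball, hUCS⟩
  -- pointwise convergence on T
  have hpt : ∀ z ∈ T, ∃ l, Tendsto (fun j => u j z) atTop (nhds l) := by
    rintro z ⟨_, ρ, hρ0, _, hUCS⟩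
    apply cauchySeq_tendsto_of_complete
    rw [Metric.cauchySeq_iff]
    rw [Metric.uniformCauchySeqOn_iff] at hUCS
    intro ε hε
    obtain ⟨N, hN⟩ := hUCS ε hε
    exact ⟨N, fun m hm n hn => hN m hm n hn z (mem_ball_self hρ0)⟩
  -- Ω ⊆ T by connectedness
  have hz₀T : z₀ ∈ T := step z₀ hz₀Ω A hAΩ hptwise hz₀acc
  have hclosed : closure T ∩ Ω ⊆ T := by
    rintro c ⟨hcT, hcΩ⟩
    by_cases hc : c ∈ T
    · exact hc
    · refine step c hcΩ T (fun z hz => hz.1) hpt ?_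
      rwa [Set.diff_singleton_eq_self hc]
  have hΩT : Ω ⊆ T := hconn.isPreconnected.subset_of_closure_inter_subset hTopen
    ⟨z₀, hz₀Ω, hz₀T⟩ hclosed
  -- the limit function
  classical
  set f : ℂ → ℂ := fun z =>
    if h : ∃ l, Tendsto (fun j => u j z) atTop (nhds l) then h.choose else 0 with hfdef
  have hf : ∀ z ∈ Ω, Tendsto (fun j => u j z) atTop (nhds (f z)) := by
    intro z hz
    have h := hpt z (hΩT hz)
    simp only [hfdef, dif_pos h]
    exact h.choose_spec
  have hTLU : TendstoLocallyUniformlyOn u f atTop Ω := by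
    intro w hw x hx
    obtain ⟨_, ρ, hρ0, hρΩ, hUCS⟩ := hΩT hx
    have hTU : TendstoUniformlyOn u f atTop (ball x ρ) :=
      hUCS.tendstoUniformlyOn_of_tendsto (fun y hy => hf y (hρΩ hy))
    exact ⟨ball x ρ, mem_nhdsWithin_of_mem_nhds (isOpen_ball.mem_nhds (mem_ball_self hρ0)),
      hTU w hw⟩
  exact ⟨f, hTLU.differentiableOn (Eventually.of_forall hu) hΩ, hTLU⟩
end
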